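/- (Sufficiency for SD-EF1) Let A be an allocation of a finite set of goods S among n agents with additive nonnegative valuations. If |A_i ∩ T_i(S,r)| ≥ |A_j ∩ T_i(S,r)| − 1 for all agents i,j and all r ∈ [|S|], then A is SD-EF1. -/
import Mathlib


open Finset
open scoped Classical

noncomputable section

/-- `A` is an allocation of the set of goods `S` among `n` agents. -/
def IsAlloc {G : Type*} (n : ℕ) (S : Finset G) (A : Fin n → Finset G) : Prop :=
  (∀ i j : Fin n, i ≠ j → Disjoint (A i) (A j)) ∧ Finset.univ.biUnion A = S

/-- The top-set `H_i(S,g) = {g' ∈ S : v g' ≥ v g}`. -/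
def topSet {G : Type*} (v : G → ℝ) (S : Finset G) (g : G) : Finset G :=
  S.filter (fun g' => v g ≤ v g')

/-- Stochastic dominance: `X ≽^SD Y` w.r.t. valuation `v` over the set of goods `S`. -/
def SDge {G : Type*} [DecidableEq G] (v : G → ℝ) (S X Y : Finset G) : Prop :=
  ∀ g ∈ S, (Y ∩ topSet v S g).card ≤ (X ∩ topSet v S g).card

/-- The allocation `A` of goods `S` is SD-EF1. -/
def SDEF1 {G : Type*} [DecidableEq G] (n : ℕ) (v : Fin n → G → ℝ) (S : Finset G)
    (A : Fin n → Finset G) : Prop :=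
  ∀ i j : Fin n, A j ≠ ∅ → ∃ g ∈ A j, SDge (v i) S (A i) ((A j).erase g)

/-- The strict preference `g ≻̂ g'` obtained from the valuation `v`, breaking ties by the
fixed (global) linear order on the goods. -/
def strictPref {G : Type*} [LinearOrder G] (v : G → ℝ) (g g' : G) : Prop :=
  v g' < v g ∨ (v g = v g' ∧ g' < g)

/-- `T` is a top-set prefix of `S` under `≻̂`: `T ⊆ S` and every good of `T` is strictly
preferred (ties broken by the global order) to every good of `S \ T`.  The set
`T_i(S, r)` is the unique such `T` of cardinality `r`. -/
def IsTopPrefix {G : Type*} [LinearOrder G] (v : G → ℝ) (S T : Finset G) : Prop :=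
  T ⊆ S ∧ ∀ g ∈ T, ∀ g' ∈ S \ T, strictPref v g g'

/-- **Sufficiency for SD-EF1.** If `|A i ∩ T_i(S,r)| ≥ |A j ∩ T_i(S,r)| − 1`
for all agents `i, j` and all `r ∈ [|S|]`, then the allocation `A` is SD-EF1. -/
theorem sdef1_of_topPrefix_condition
    {G : Type*} [LinearOrder G] (n : ℕ) (hn : 0 < n)
    (S : Finset G) (v : Fin n → G → ℝ)
    (hv : ∀ i : Fin n, ∀ g ∈ S, 0 ≤ v i g)
    (A : Fin n → Finset G) (hA : IsAlloc n S A)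
    (h : ∀ i j : Fin n, ∀ r ∈ Finset.Icc 1 S.card, ∀ T : Finset G,
      IsTopPrefix (v i) S T → T.card = r → (A j ∩ T).card ≤ (A i ∩ T).card + 1) :
    SDEF1 n v S A := by
  intro i j hj
  obtain ⟨g, hgA, hmax⟩ := Finset.exists_max_image (A j) (v i)
    (Finset.nonempty_of_ne_empty hj)
  have hAjS : A j ⊆ S := by
    intro x hx
    rw [← hA.2]
    simp only [Finset.mem_biUnion]
    exact ⟨j, Finset.mem_univ j, hx⟩
  refine ⟨g, hgA, ?_⟩
  intro g' hg'S
  set T := topSet (v i) S g' with hT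
  by_cases h0 : ∃ x ∈ A j, x ∈ T
  · obtain ⟨x, hxA, hxT⟩ := h0
    have hxv : v i g' ≤ v i x := (Finset.mem_filter.mp hxT).2
    have hgT : g ∈ T := Finset.mem_filter.mpr ⟨hAjS hgA, le_trans hxv (hmax x hxA)⟩
    have hTP : IsTopPrefix (v i) S T := by
      constructor
      · exact Finset.filter_subset _ _
      · intro a ha b hb
        left
        have h1 : v i g' ≤ v i a := (Finset.mem_filter.mp ha).2
        have h2 : ¬ (v i g' ≤ v i b) := by
          rcases Finset.mem_sdiff.mp hb with ⟨hbS, hbT⟩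
          intro hc
          exact hbT (Finset.mem_filter.mpr ⟨hbS, hc⟩)
        linarith [not_le.mp h2]
    have hr : T.card ∈ Finset.Icc 1 S.card := by
      rw [Finset.mem_Icc]
      exact ⟨Finset.card_pos.mpr ⟨g, hgT⟩, Finset.card_le_card (Finset.filter_subset _ _)⟩
    have hcard := h i j T.card hr T hTP rfl
    have hsub : (A j).erase g ∩ T ⊆ (A j ∩ T).erase g := by
      intro y hy
      rcases Finset.mem_inter.mp hy with ⟨hy1, hy2⟩
      exact Finset.mem_erase.mpr ⟨(Finset.mem_erase.mp hy1).1,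
        Finset.mem_inter.mpr ⟨(Finset.mem_erase.mp hy1).2, hy2⟩⟩
    have h2 : ((A j ∩ T).erase g).card = (A j ∩ T).card - 1 :=
      Finset.card_erase_of_mem (Finset.mem_inter.mpr ⟨hgA, hgT⟩)
    have := Finset.card_le_card hsub
    omega
  · have hempty : (A j).erase g ∩ T ⊆ ∅ := by
      intro y hy
      rcases Finset.mem_inter.mp hy with ⟨hy1, hy2⟩
      exact absurd ⟨y, Finset.mem_of_mem_erase hy1, hy2⟩ h0
    have := Finset.card_le_card hempty
    simp at this
    simp [this]
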